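/- arXiv:2312.15835 — 13 statements merged into one kernel-verified Lean document; each statement's English description precedes it below -/
import Mathlib

section
/- Let a and b be finite sets of tokens from a linearly ordered token type, and let τ_o be a positive integer with |a ∩ b| ≥ τ_o. Then the set of the (|a| − τ_o + 1) smallest elements of a and the set of the (|b| − τ_o + 1) smallest elements of b have at least one element in common. -/
/-- The set of the `m` smallest elements of a finite set `x`
    over a linearly ordered type. -/
def prefixSet {T : Type*} [LinearOrder T] (x : Finset T) (m : ℕ) : Finset T :=
  ((x.sort (· ≤ ·)).take m).toFinset

lemma mem_prefixSet_of_rank {T : Type*} [LinearOrder T] (x : Finset T) (m : ℕ) (c : T)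
    (hc : c ∈ x) (hm : (x.filter (· < c)).card < m) : c ∈ prefixSet x m := by
  classical
  set l := x.sort (· ≤ ·) with hl
  have hcl : c ∈ l := (Finset.mem_sort _).2 hc
  have hnd : l.Nodup := x.sort_nodup _
  have hsorted : l.Pairwise (· ≤ ·) := x.pairwise_sort _
  set i := l.idxOf c with hi
  have hilt : i < l.length := List.idxOf_lt_length_iff.2 hcl
  -- every element of l.take i is in x.filter (· < c)
  have hsub : ∀ e ∈ l.take i, e ∈ x.filter (· < c) := by
    intro e he
    obtain ⟨j, hj, hje⟩ := List.getElem_of_mem he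
    have hjlen : j < i := lt_of_lt_of_le hj (by simp [List.length_take])
    rw [List.getElem_take] at hje
    have hle : l[j] ≤ l[i] := hsorted.rel_get_of_lt (by simpa using hjlen)
    have hne : l[j] ≠ l[i] := by
      intro hEq
      exact absurd (hnd.getElem_inj_iff.1 hEq) (by omega)
    have hci : l[i] = c := List.getElem_idxOf hilt
    have hex : e ∈ x := (Finset.mem_sort (α := T) (· ≤ ·)).1 (hje ▸ List.getElem_mem _)
    refine Finset.mem_filter.2 ⟨hex, ?_⟩
    rw [← hje, ← hci]
    exact lt_of_le_of_ne hle hne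
  have hndt : (l.take i).Nodup := hnd.sublist (List.take_sublist _ _)
  have hcard : (l.take i).length ≤ (x.filter (· < c)).card := by
    have := Finset.card_le_card (s := (l.take i).toFinset) (t := x.filter (· < c))
      (fun e he => hsub e (List.mem_toFinset.1 he))
    simpa [List.toFinset_card_of_nodup hndt] using this
  have hlen : (l.take i).length = i := by simp [List.length_take]; omega
  have him : i < m := by omega
  have : c ∈ l.take m := by
    have hci : l[i] = c := List.getElem_idxOf hilt
    have : (l.take m)[i]'(by simp [List.length_take]; omega) = c := by
      rw [List.getElem_take]; exact hci
    exact this ▸ List.getElem_mem _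
  simpa [prefixSet] using this

/-- Unweighted Prefix Filtering Principle. -/
theorem unweighted_prefix_filtering {T : Type*} [LinearOrder T]
    (a b : Finset T) (τo : ℕ) (hτ : 0 < τo) (h : τo ≤ (a ∩ b).card) :
    (prefixSet a (a.card - τo + 1) ∩ prefixSet b (b.card - τo + 1)).Nonempty := by
  classical
  have hne : (a ∩ b).Nonempty := Finset.card_pos.1 (lt_of_lt_of_le hτ h)
  set c := (a ∩ b).min' hne with hc
  have hcmem : c ∈ a ∩ b := (a ∩ b).min'_mem hne
  have hca : c ∈ a := (Finset.mem_inter.1 hcmem).1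
  have hcb : c ∈ b := (Finset.mem_inter.1 hcmem).2
  have key : ∀ (x : Finset T), c ∈ x → a ∩ b ⊆ x →
      (x.filter (· < c)).card < x.card - τo + 1 := by
    intro x hcx hsub
    have h1 : a ∩ b ⊆ x.filter (fun e => c ≤ e) := by
      intro e he
      exact Finset.mem_filter.2 ⟨hsub he, (a ∩ b).min'_le e he⟩
    have h2 : τo ≤ (x.filter (fun e => c ≤ e)).card :=
      le_trans h (Finset.card_le_card h1)
    have h3 : (x.filter (· < c)).card + (x.filter (fun e => c ≤ e)).card = x.card := by
      have := Finset.card_filter_add_card_filter_not (s := x) (p := (· < c))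
      simpa [not_lt] using this
    omega
  exact ⟨c, Finset.mem_inter.2 ⟨mem_prefixSet_of_rank a _ c hca (key a hca Finset.inter_subset_left),
    mem_prefixSet_of_rank b _ c hcb (key b hcb Finset.inter_subset_right)⟩⟩
end

section
/- Let a and b be weighted token sets over a linearly ordered token type, and let τ_o > 0 be a real number with Σ_t min(a(t), b(t)) ≥ τ_o. Then there exists a token t with a(t) > 0 and b(t) > 0 such that Σ_{s < t} a(s) ≤ ω(a) − τ_o and Σ_{s < t} b(s) ≤ ω(b) − τ_o. -/
/-- Weighted Prefix Filtering Principle. -/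
theorem weighted_prefix_filtering {T : Type*} [LinearOrder T] (a b : T → ℝ)
    (haf : (Function.support a).Finite) (hbf : (Function.support b).Finite)
    (ha0 : ∀ t, 0 ≤ a t) (hb0 : ∀ t, 0 ≤ b t)
    (τo : ℝ) (hτ : 0 < τo)
    (h : τo ≤ ∑ᶠ t, min (a t) (b t)) :
    ∃ t, 0 < a t ∧ 0 < b t ∧
      (∑ᶠ s ∈ Set.Iio t, a s) ≤ (∑ᶠ s, a s) - τo ∧
      (∑ᶠ s ∈ Set.Iio t, b s) ≤ (∑ᶠ s, b s) - τo := by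
  classical
  set F : Finset T := haf.toFinset ∪ hbf.toFinset with hF
  have hsupa : Function.support a ⊆ ↑F := by
    intro x hx; simp [hF, Set.Finite.mem_toFinset]; left; exact hx
  have hsupb : Function.support b ⊆ ↑F := by
    intro x hx; simp [hF, Set.Finite.mem_toFinset]; right; exact hx
  have hsupm : Function.support (fun s => min (a s) (b s)) ⊆ ↑F := by
    intro x hx
    have hxa : a x ≠ 0 := by
      intro h0
      apply hx
      simp only [Function.mem_support] at hx ⊢
      have : min (a x) (b x) = 0 := by
        rw [h0]; exact min_eq_left (hb0 x) ▸ (by simp [h0, le_min_iff, hb0 x] : min (0:ℝ) (b x) = 0)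
      exact this
    exact hsupa hxa
  have hmin_eq : ∑ᶠ t, min (a t) (b t) = ∑ s ∈ F, min (a s) (b s) :=
    finsum_eq_finset_sum_of_support_subset _ hsupm
  have ha_eq : ∑ᶠ s, a s = ∑ s ∈ F, a s :=
    finsum_eq_finset_sum_of_support_subset _ hsupa
  have hb_eq : ∑ᶠ s, b s = ∑ s ∈ F, b s :=
    finsum_eq_finset_sum_of_support_subset _ hsupb
  set C : Finset T := F.filter (fun s => 0 < a s ∧ 0 < b s) with hC
  have hCne : C.Nonempty := by
    by_contra hne
    have hC0 : ∀ s ∈ F, min (a s) (b s) = 0 := by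
      intro s hs
      by_contra h0
      apply hne
      have hapos : 0 < a s := (ha0 s).lt_of_ne fun h' => h0 (by
        simp [← h', min_eq_left (hb0 s)])
      have hbpos : 0 < b s := (hb0 s).lt_of_ne fun h' => h0 (by
        simp [← h', min_eq_right (ha0 s)])
      exact ⟨s, Finset.mem_filter.mpr ⟨hs, hapos, hbpos⟩⟩
    have : ∑ s ∈ F, min (a s) (b s) = 0 := Finset.sum_eq_zero hC0
    rw [hmin_eq, this] at h
    linarith
  set t := C.min' hCne with ht
  have htC : t ∈ C := C.min'_mem hCne
  obtain ⟨htF, hta, htb⟩ : t ∈ F ∧ 0 < a t ∧ 0 < b t := by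
    simpa [hC, Finset.mem_filter] using htC
  -- key inequality: τo ≤ ∑ over tail of a (and of b)
  have hCsub : C ⊆ F.filter (fun s => ¬ s < t) := by
    intro x hx
    refine Finset.mem_filter.mpr ⟨Finset.mem_filter.mp hx |>.1, not_lt.mpr (C.min'_le x hx)⟩
  have hminC : ∑ s ∈ F, min (a s) (b s) = ∑ s ∈ C, min (a s) (b s) := by
    refine (Finset.sum_subset (Finset.filter_subset _ _) ?_).symm
    intro x hxF hxC
    have : ¬ (0 < a x ∧ 0 < b x) := by
      intro hc; exact hxC (Finset.mem_filter.mpr ⟨hxF, hc⟩)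
    rcases not_and_or.mp this with h' | h'
    · have : a x = 0 := le_antisymm (not_lt.mp h') (ha0 x)
      simp [this, min_eq_left (hb0 x), le_min_iff, hb0 x]
    · have : b x = 0 := le_antisymm (not_lt.mp h') (hb0 x)
      simp [this, min_eq_right (ha0 x)]
  have keya : τo ≤ ∑ s ∈ F.filter (fun s => ¬ s < t), a s := by
    calc τo ≤ ∑ s ∈ F, min (a s) (b s) := hmin_eq ▸ h
    _ = ∑ s ∈ C, min (a s) (b s) := hminC
    _ ≤ ∑ s ∈ C, a s := Finset.sum_le_sum (fun i _ => min_le_left _ _)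
    _ ≤ ∑ s ∈ F.filter (fun s => ¬ s < t), a s :=
        Finset.sum_le_sum_of_subset_of_nonneg hCsub (fun i _ _ => ha0 i)
  have keyb : τo ≤ ∑ s ∈ F.filter (fun s => ¬ s < t), b s := by
    calc τo ≤ ∑ s ∈ F, min (a s) (b s) := hmin_eq ▸ h
    _ = ∑ s ∈ C, min (a s) (b s) := hminC
    _ ≤ ∑ s ∈ C, b s := Finset.sum_le_sum (fun i _ => min_le_right _ _)
    _ ≤ ∑ s ∈ F.filter (fun s => ¬ s < t), b s :=
        Finset.sum_le_sum_of_subset_of_nonneg hCsub (fun i _ _ => hb0 i)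
  have hIioa : (∑ᶠ s ∈ Set.Iio t, a s) = ∑ s ∈ F.filter (fun s => s < t), a s := by
    apply finsum_mem_eq_sum_of_inter_support_eq
    ext x
    simp only [Set.mem_inter_iff, Set.mem_Iio, Finset.coe_filter, Set.mem_setOf_eq]
    constructor
    · rintro ⟨hx, hxs⟩; exact ⟨⟨hsupa hxs, hx⟩, hxs⟩
    · rintro ⟨⟨_, hx⟩, hxs⟩; exact ⟨hx, hxs⟩
  have hIiob : (∑ᶠ s ∈ Set.Iio t, b s) = ∑ s ∈ F.filter (fun s => s < t), b s := by
    apply finsum_mem_eq_sum_of_inter_support_eq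
    ext x
    simp only [Set.mem_inter_iff, Set.mem_Iio, Finset.coe_filter, Set.mem_setOf_eq]
    constructor
    · rintro ⟨hx, hxs⟩; exact ⟨⟨hsupb hxs, hx⟩, hxs⟩
    · rintro ⟨⟨_, hx⟩, hxs⟩; exact ⟨hx, hxs⟩
  have hsplita : ∑ s ∈ F.filter (fun s => s < t), a s + ∑ s ∈ F.filter (fun s => ¬ s < t), a s
      = ∑ s ∈ F, a s := Finset.sum_filter_add_sum_filter_not F _ a
  have hsplitb : ∑ s ∈ F.filter (fun s => s < t), b s + ∑ s ∈ F.filter (fun s => ¬ s < t), b s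
      = ∑ s ∈ F, b s := Finset.sum_filter_add_sum_filter_not F _ b
  refine ⟨t, hta, htb, ?_, ?_⟩
  · rw [hIioa, ha_eq]; linarith
  · rw [hIiob, hb_eq]; linarith
end

section
/- Let a and b be finite sets of tokens from a linearly ordered token type, let τ_o be a real number, and let t ∈ a ∩ b be a common token. Write a₋ = {x ∈ a : x < t}, a₊ = {x ∈ a : x > t}, b₋ = {x ∈ b : x < t}, b₊ = {x ∈ b : x > t}. If |a ∩ b| ≥ τ_o, then |a₋ ∩ b₋| + 1 + min(|a₊|, |b₊|) ≥ τ_o. -/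
/-- Unweighted Positional Filtering Principle. -/
theorem unweighted_positional_filtering {T : Type*} [LinearOrder T]
    (a b : Finset T) (τo : ℝ) (t : T) (ht : t ∈ a ∩ b)
    (h : τo ≤ ((a ∩ b).card : ℝ)) :
    τo ≤ (((a.filter (fun x => x < t)) ∩ (b.filter (fun x => x < t))).card : ℝ) + 1 +
      min (((a.filter (fun x => t < x)).card : ℝ))
          (((b.filter (fun x => t < x)).card : ℝ)) := by
  refine h.trans ?_
  have key : (a ∩ b).card ≤
      ((a.filter (fun x => x < t)) ∩ (b.filter (fun x => x < t))).card + 1 +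
      min ((a.filter (fun x => t < x)).card) ((b.filter (fun x => t < x)).card) := by
    have hsub : a ∩ b ⊆
        ((a.filter (fun x => x < t)) ∩ (b.filter (fun x => x < t))) ∪
        ({t} ∪ ((a ∩ b).filter (fun x => t < x))) := by
      intro x hx
      simp only [Finset.mem_inter, Finset.mem_filter, Finset.mem_union,
        Finset.mem_singleton] at hx ⊢
      rcases lt_trichotomy x t with h1 | h1 | h1
      · exact Or.inl ⟨⟨hx.1, h1⟩, hx.2, h1⟩
      · exact Or.inr (Or.inl h1)
      · exact Or.inr (Or.inr ⟨hx, h1⟩)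
    calc (a ∩ b).card ≤ _ := Finset.card_le_card hsub
      _ ≤ ((a.filter (fun x => x < t)) ∩ (b.filter (fun x => x < t))).card +
            (({t} : Finset T) ∪ ((a ∩ b).filter (fun x => t < x))).card :=
          Finset.card_union_le _ _
      _ ≤ ((a.filter (fun x => x < t)) ∩ (b.filter (fun x => x < t))).card +
            (1 + ((a ∩ b).filter (fun x => t < x)).card) := by
          gcongr
          exact (Finset.card_union_le _ _).trans (by simp)
      _ ≤ _ := by
          rw [← add_assoc]
          gcongr
          refine le_min ?_ ?_ <;>
            exact Finset.card_le_card (fun x hx => by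
              simp only [Finset.mem_filter, Finset.mem_inter] at hx ⊢
              tauto)
  exact_mod_cast key
end

section
/- Let a and b be weighted token sets over a linearly ordered token type, let τ_o be a real number, and let t be a token with a(t) > 0 and b(t) > 0. If Σ_s min(a(s), b(s)) ≥ τ_o, then Σ_{s < t} min(a(s), b(s)) + min(a(t), b(t)) + min( Σ_{s > t} a(s), Σ_{s > t} b(s) ) ≥ τ_o. -/
/-- Weighted Positional Filtering Principle. -/
theorem weighted_positional_filtering {T : Type*} [LinearOrder T] (a b : T → ℝ)
    (haf : (Function.support a).Finite) (hbf : (Function.support b).Finite)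
    (ha0 : ∀ t, 0 ≤ a t) (hb0 : ∀ t, 0 ≤ b t)
    (τo : ℝ) (t : T) (hat : 0 < a t) (hbt : 0 < b t)
    (h : τo ≤ ∑ᶠ s, min (a s) (b s)) :
    τo ≤ (∑ᶠ s ∈ Set.Iio t, min (a s) (b s)) + min (a t) (b t) +
      min (∑ᶠ s ∈ Set.Ioi t, a s) (∑ᶠ s ∈ Set.Ioi t, b s) := by
  classical
  set m : T → ℝ := fun s => min (a s) (b s) with hm
  set S : Finset T := (haf.union hbf).toFinset with hS
  have hmsub : Function.support m ⊆ (S : Set T) := by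
    intro x hx
    simp only [hS, Set.Finite.coe_toFinset, Set.mem_union]
    by_contra hc
    push_neg at hc
    simp only [Function.mem_support] at hc ⊢
    have : a x = 0 := by
      by_contra h'; exact hc.1 h'
    have hb : b x = 0 := by
      by_contra h'; exact hc.2 h'
    apply hx
    simp [hm, this, hb]
  have hasub : Function.support a ⊆ (S : Set T) := by
    intro x hx; simp [hS, Set.Finite.coe_toFinset]; left; exact hx
  have hbsub : Function.support b ⊆ (S : Set T) := by
    intro x hx; simp [hS, Set.Finite.coe_toFinset]; right; exact hx
  have h1 : ∑ᶠ s, m s = ∑ s ∈ S, m s :=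
    finsum_eq_finset_sum_of_support_subset _ hmsub
  have h2 : ∑ᶠ s ∈ Set.Iio t, m s = ∑ s ∈ S.filter (· < t), m s := by
    apply finsum_mem_eq_sum_of_inter_support_eq
    ext x
    simp only [Set.mem_inter_iff, Set.mem_Iio, Finset.coe_filter, Set.mem_setOf_eq]
    exact ⟨fun ⟨h1, h2⟩ => ⟨⟨hmsub h2, h1⟩, h2⟩, fun ⟨⟨_, h1⟩, h2⟩ => ⟨h1, h2⟩⟩
  have h3 : ∑ᶠ s ∈ Set.Ioi t, a s = ∑ s ∈ S.filter (t < ·), a s := by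
    apply finsum_mem_eq_sum_of_inter_support_eq
    ext x
    simp only [Set.mem_inter_iff, Set.mem_Ioi, Finset.coe_filter, Set.mem_setOf_eq]
    exact ⟨fun ⟨h1, h2⟩ => ⟨⟨hasub h2, h1⟩, h2⟩, fun ⟨⟨_, h1⟩, h2⟩ => ⟨h1, h2⟩⟩
  have h4 : ∑ᶠ s ∈ Set.Ioi t, b s = ∑ s ∈ S.filter (t < ·), b s := by
    apply finsum_mem_eq_sum_of_inter_support_eq
    ext x
    simp only [Set.mem_inter_iff, Set.mem_Ioi, Finset.coe_filter, Set.mem_setOf_eq]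
    exact ⟨fun ⟨h1, h2⟩ => ⟨⟨hbsub h2, h1⟩, h2⟩, fun ⟨⟨_, h1⟩, h2⟩ => ⟨h1, h2⟩⟩
  have htS : t ∈ S := by
    simp [hS, Set.Finite.mem_toFinset]; left; exact ne_of_gt hat
  -- split S into three parts
  have hd1 : Disjoint ({t} : Finset T) (S.filter (t < ·)) := by
    rw [Finset.disjoint_left]
    intro x hx hx'
    simp only [Finset.mem_singleton] at hx
    simp only [Finset.mem_filter] at hx'
    exact absurd hx' (by rw [hx]; simp)
  have hd2 : Disjoint (S.filter (· < t)) ({t} ∪ S.filter (t < ·)) := by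
    rw [Finset.disjoint_left]
    intro x hx hx'
    simp only [Finset.mem_filter] at hx
    simp only [Finset.mem_union, Finset.mem_singleton, Finset.mem_filter] at hx'
    rcases hx' with h'' | ⟨_, hx'⟩
    · exact absurd h'' hx.2.ne
    · exact absurd (hx.2.trans hx') (lt_irrefl x)
  have hsplit : ∑ s ∈ S, m s =
      ∑ s ∈ S.filter (· < t), m s + m t + ∑ s ∈ S.filter (t < ·), m s := by
    have hU : S = S.filter (· < t) ∪ ({t} ∪ S.filter (t < ·)) := by
      ext x
      simp only [Finset.mem_union, Finset.mem_filter, Finset.mem_singleton]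
      constructor
      · intro hx
        rcases lt_trichotomy x t with h' | h' | h'
        · exact Or.inl ⟨hx, h'⟩
        · exact Or.inr (Or.inl h')
        · exact Or.inr (Or.inr ⟨hx, h'⟩)
      · rintro (⟨hx, _⟩ | rfl | ⟨hx, _⟩) <;> first | exact hx | exact htS
    conv_lhs => rw [hU]
    rw [Finset.sum_union hd2, Finset.sum_union hd1, Finset.sum_singleton, ← add_assoc]
  have hmono : ∑ s ∈ S.filter (t < ·), m s ≤
      min (∑ s ∈ S.filter (t < ·), a s) (∑ s ∈ S.filter (t < ·), b s) := by
    apply le_min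
    · exact Finset.sum_le_sum fun i _ => min_le_left _ _
    · exact Finset.sum_le_sum fun i _ => min_le_right _ _
  calc τo ≤ ∑ᶠ s, m s := h
    _ = ∑ s ∈ S.filter (· < t), m s + m t + ∑ s ∈ S.filter (t < ·), m s := by
        rw [h1, hsplit]
    _ ≤ (∑ᶠ s ∈ Set.Iio t, m s) + m t +
        min (∑ᶠ s ∈ Set.Ioi t, a s) (∑ᶠ s ∈ Set.Ioi t, b s) := by
        rw [h2, h3, h4]
        exact add_le_add_right hmono _
end

section
/- Let a and b be finite nonempty sets and let 0 < τ ≤ 1 be a real number. If the Cosine set similarity |a ∩ b| / √(|a| · |b|) is at least τ, then |a ∩ b| ≥ τ² · |a|, and moreover τ² · |a| ≤ |b| ≤ |a| / τ². -/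
/-- Cosine overlap lower bound and size filter bounds. -/
theorem cosine_overlap_and_size_bounds {α : Type*} [DecidableEq α]
    (a b : Finset α) (ha : a.Nonempty) (hb : b.Nonempty)
    (τ : ℝ) (hτ0 : 0 < τ) (hτ1 : τ ≤ 1)
    (h : τ ≤ ((a ∩ b).card : ℝ) / Real.sqrt ((a.card : ℝ) * (b.card : ℝ))) :
    τ ^ 2 * (a.card : ℝ) ≤ ((a ∩ b).card : ℝ) ∧
      τ ^ 2 * (a.card : ℝ) ≤ (b.card : ℝ) ∧
      (b.card : ℝ) ≤ (a.card : ℝ) / τ ^ 2 := by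
  have hac : (0:ℝ) < a.card := by exact_mod_cast Finset.card_pos.mpr ha
  have hbc : (0:ℝ) < b.card := by exact_mod_cast Finset.card_pos.mpr hb
  have hprod : (0:ℝ) < (a.card : ℝ) * (b.card : ℝ) := mul_pos hac hbc
  have hsqrt : (0:ℝ) < Real.sqrt ((a.card : ℝ) * (b.card : ℝ)) := Real.sqrt_pos.mpr hprod
  have h1 : τ * Real.sqrt ((a.card : ℝ) * (b.card : ℝ)) ≤ ((a ∩ b).card : ℝ) := by
    rw [← le_div_iff₀ hsqrt]; exact h
  have h2 : τ ^ 2 * ((a.card : ℝ) * (b.card : ℝ)) ≤ ((a ∩ b).card : ℝ) ^ 2 := by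
    have := mul_le_mul h1 h1 (by positivity) (Nat.cast_nonneg _)
    calc τ ^ 2 * ((a.card : ℝ) * (b.card : ℝ))
        = (τ * Real.sqrt ((a.card : ℝ) * (b.card : ℝ))) *
          (τ * Real.sqrt ((a.card : ℝ) * (b.card : ℝ))) := by
          rw [mul_mul_mul_comm, Real.mul_self_sqrt hprod.le]; ring
      _ ≤ ((a ∩ b).card : ℝ) ^ 2 := by rw [sq]; exact this
  have hia : ((a ∩ b).card : ℝ) ≤ (a.card : ℝ) := by
    exact_mod_cast Finset.card_le_card (Finset.inter_subset_left)
  have hib : ((a ∩ b).card : ℝ) ≤ (b.card : ℝ) := by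
    exact_mod_cast Finset.card_le_card (Finset.inter_subset_right)
  have key : τ ^ 2 * (a.card : ℝ) ≤ ((a ∩ b).card : ℝ) := by
    have h3 : ((a ∩ b).card : ℝ) ^ 2 ≤ ((a ∩ b).card : ℝ) * (b.card : ℝ) := by
      rw [sq]; exact mul_le_mul_of_nonneg_left hib (Nat.cast_nonneg _)
    have := h2.trans h3
    have := (mul_le_mul_iff_of_pos_right hbc).mp (by linarith [this] : (τ ^ 2 * (a.card : ℝ)) * (b.card : ℝ) ≤ ((a ∩ b).card : ℝ) * (b.card : ℝ))
    exact this
  refine ⟨key, key.trans hib, ?_⟩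
  have h4 : ((a ∩ b).card : ℝ) ^ 2 ≤ (a.card : ℝ) ^ 2 := by
    have : (0:ℝ) ≤ ((a ∩ b).card : ℝ) := Nat.cast_nonneg _
    nlinarith
  have h5 : τ ^ 2 * ((a.card : ℝ) * (b.card : ℝ)) ≤ (a.card : ℝ) ^ 2 := h2.trans h4
  rw [le_div_iff₀ (by positivity : (0:ℝ) < τ ^ 2)]
  nlinarith
end

section
/- Let a and b be finite nonempty sets and let 0 < τ ≤ 1 be a real number. If the Dice similarity 2|a ∩ b| / (|a| + |b|) is at least τ, then |a ∩ b| ≥ (τ / (2 − τ)) · |a|, and moreover (τ / (2 − τ)) · |a| ≤ |b| ≤ ((2 − τ) / τ) · |a|. -/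
/-- Dice overlap lower bound and size filter bounds. -/
theorem dice_overlap_and_size_bounds {α : Type*} [DecidableEq α]
    (a b : Finset α) (ha : a.Nonempty) (hb : b.Nonempty)
    (τ : ℝ) (hτ0 : 0 < τ) (hτ1 : τ ≤ 1)
    (h : τ ≤ 2 * ((a ∩ b).card : ℝ) / ((a.card : ℝ) + (b.card : ℝ))) :
    (τ / (2 - τ)) * (a.card : ℝ) ≤ ((a ∩ b).card : ℝ) ∧
      (τ / (2 - τ)) * (a.card : ℝ) ≤ (b.card : ℝ) ∧
      (b.card : ℝ) ≤ ((2 - τ) / τ) * (a.card : ℝ) := by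
  have hA : (0:ℝ) < a.card := by exact_mod_cast ha.card_pos
  have hB : (0:ℝ) < b.card := by exact_mod_cast hb.card_pos
  have hia : ((a ∩ b).card : ℝ) ≤ a.card := by
    exact_mod_cast Finset.card_le_card (Finset.inter_subset_left)
  have hib : ((a ∩ b).card : ℝ) ≤ b.card := by
    exact_mod_cast Finset.card_le_card (Finset.inter_subset_right)
  have hsum : (0:ℝ) < (a.card : ℝ) + b.card := by linarith
  have h' : τ * ((a.card : ℝ) + b.card) ≤ 2 * ((a ∩ b).card : ℝ) := by
    rw [div_eq_mul_inv] at h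
    nlinarith [mul_le_mul_of_nonneg_right h hsum.le, mul_inv_cancel₀ hsum.ne']
  have h2 : (0:ℝ) < 2 - τ := by linarith
  refine ⟨?_, ?_, ?_⟩
  · rw [div_mul_eq_mul_div, div_le_iff₀ h2]; nlinarith
  · rw [div_mul_eq_mul_div, div_le_iff₀ h2]; nlinarith
  · rw [div_mul_eq_mul_div, le_div_iff₀ hτ0]; nlinarith
end

section
/- Let a and b be weighted token sets with ω(a) > 0 and ω(b) > 0, and let 0 < τ ≤ 1 be a real number. If the weighted Jaccard similarity Σ_t min(a(t), b(t)) / Σ_t max(a(t), b(t)) is at least τ, then Σ_t min(a(t), b(t)) ≥ τ · ω(a), and moreover τ · ω(a) ≤ ω(b) ≤ ω(a) / τ. -/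
/-- Weighted Jaccard overlap lower bound and size filter bounds. -/
theorem weighted_jaccard_overlap_and_size_bounds {T : Type*} (a b : T → ℝ)
    (haf : (Function.support a).Finite) (hbf : (Function.support b).Finite)
    (ha0 : ∀ t, 0 ≤ a t) (hb0 : ∀ t, 0 ≤ b t)
    (hωa : 0 < ∑ᶠ t, a t) (hωb : 0 < ∑ᶠ t, b t)
    (τ : ℝ) (hτ0 : 0 < τ) (hτ1 : τ ≤ 1)
    (h : τ ≤ (∑ᶠ t, min (a t) (b t)) / (∑ᶠ t, max (a t) (b t))) :
    τ * (∑ᶠ t, a t) ≤ (∑ᶠ t, min (a t) (b t)) ∧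
      τ * (∑ᶠ t, a t) ≤ (∑ᶠ t, b t) ∧
      (∑ᶠ t, b t) ≤ (∑ᶠ t, a t) / τ := by
  classical
  set s : Finset T := (haf.union hbf).toFinset with hs
  have hsub : Function.support a ∪ Function.support b ⊆ ↑s := by
    simp [hs]
  have hsa : Function.support a ⊆ ↑s := subset_trans Set.subset_union_left hsub
  have hsb : Function.support b ⊆ ↑s := subset_trans Set.subset_union_right hsub
  have hsmin : Function.support (fun t => min (a t) (b t)) ⊆ ↑s := by
    intro t ht
    apply hsa
    simp only [Function.mem_support] at ht ⊢
    intro h0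
    exact ht (by rw [h0]; exact min_eq_left (hb0 t))
  have hsmax : Function.support (fun t => max (a t) (b t)) ⊆ ↑s := by
    intro t ht
    simp only [Function.mem_support] at ht
    by_cases h0 : a t = 0
    · exact hsb (by simp only [Function.mem_support]; intro hb'; exact ht (by simp [h0, hb']))
    · exact hsa h0
  have ea : (∑ᶠ t, a t) = ∑ t ∈ s, a t := finsum_eq_sum_of_support_subset _ hsa
  have eb : (∑ᶠ t, b t) = ∑ t ∈ s, b t := finsum_eq_sum_of_support_subset _ hsb
  have emin : (∑ᶠ t, min (a t) (b t)) = ∑ t ∈ s, min (a t) (b t) :=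
    finsum_eq_sum_of_support_subset _ hsmin
  have emax : (∑ᶠ t, max (a t) (b t)) = ∑ t ∈ s, max (a t) (b t) :=
    finsum_eq_sum_of_support_subset _ hsmax
  have hmin_le_a : (∑ᶠ t, min (a t) (b t)) ≤ ∑ᶠ t, a t := by
    rw [ea, emin]; exact Finset.sum_le_sum fun t _ => min_le_left _ _
  have hmin_le_b : (∑ᶠ t, min (a t) (b t)) ≤ ∑ᶠ t, b t := by
    rw [eb, emin]; exact Finset.sum_le_sum fun t _ => min_le_right _ _
  have ha_le_max : (∑ᶠ t, a t) ≤ ∑ᶠ t, max (a t) (b t) := by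
    rw [ea, emax]; exact Finset.sum_le_sum fun t _ => le_max_left _ _
  have hb_le_max : (∑ᶠ t, b t) ≤ ∑ᶠ t, max (a t) (b t) := by
    rw [eb, emax]; exact Finset.sum_le_sum fun t _ => le_max_right _ _
  have hmaxpos : 0 < ∑ᶠ t, max (a t) (b t) := lt_of_lt_of_le hωa ha_le_max
  have key : τ * (∑ᶠ t, max (a t) (b t)) ≤ ∑ᶠ t, min (a t) (b t) := by
    rw [le_div_iff₀ hmaxpos] at h
    linarith [h]
  have h1 : τ * (∑ᶠ t, a t) ≤ ∑ᶠ t, min (a t) (b t) := by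
    calc τ * (∑ᶠ t, a t) ≤ τ * (∑ᶠ t, max (a t) (b t)) := by
          exact mul_le_mul_of_nonneg_left ha_le_max hτ0.le
      _ ≤ _ := key
  refine ⟨h1, le_trans h1 hmin_le_b, ?_⟩
  rw [le_div_iff₀ hτ0, mul_comm]
  calc τ * (∑ᶠ t, b t) ≤ τ * (∑ᶠ t, max (a t) (b t)) :=
        mul_le_mul_of_nonneg_left hb_le_max hτ0.le
    _ ≤ ∑ᶠ t, min (a t) (b t) := key
    _ ≤ ∑ᶠ t, a t := hmin_le_a
end

section
/- Let a and b be weighted token sets with ω(a) > 0 and ω(b) > 0, and let 0 < τ ≤ 1 be a real number. If the weighted Jaccard similarity Σ_t min(a(t), b(t)) / Σ_t max(a(t), b(t)) is at least τ, then Σ_t min(a(t), b(t)) ≥ (τ / (τ + 1)) · (ω(a) + ω(b)). -/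
/-- Weighted Jaccard equivalent overlap for the positional filter. -/
theorem weighted_jaccard_equivalent_overlap {T : Type*} (a b : T → ℝ)
    (haf : (Function.support a).Finite) (hbf : (Function.support b).Finite)
    (ha0 : ∀ t, 0 ≤ a t) (hb0 : ∀ t, 0 ≤ b t)
    (hωa : 0 < ∑ᶠ t, a t) (hωb : 0 < ∑ᶠ t, b t)
    (τ : ℝ) (hτ0 : 0 < τ) (hτ1 : τ ≤ 1)
    (h : τ ≤ (∑ᶠ t, min (a t) (b t)) / (∑ᶠ t, max (a t) (b t))) :
    (τ / (τ + 1)) * ((∑ᶠ t, a t) + (∑ᶠ t, b t)) ≤ (∑ᶠ t, min (a t) (b t)) := by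
  have huf : (Function.support a ∪ Function.support b).Finite := haf.union hbf
  set s : Finset T := huf.toFinset with hs
  have hsub_a : Function.support a ⊆ ↑s := by
    intro t ht; simp [hs, Set.Finite.mem_toFinset]; exact Or.inl ht
  have hsub_b : Function.support b ⊆ ↑s := by
    intro t ht; simp [hs, Set.Finite.mem_toFinset]; exact Or.inr ht
  have hsub_min : Function.support (fun t => min (a t) (b t)) ⊆ ↑s := by
    intro t ht
    simp only [Function.mem_support, ne_eq] at ht
    by_contra hc
    have ha' : a t = 0 := Function.notMem_support.mp (fun h' => hc (hsub_a h'))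
    have hb' : b t = 0 := Function.notMem_support.mp (fun h' => hc (hsub_b h'))
    exact ht (by simp [ha', hb'])
  have hsub_max : Function.support (fun t => max (a t) (b t)) ⊆ ↑s := by
    intro t ht
    simp only [Function.mem_support, ne_eq] at ht
    by_contra hc
    have ha' : a t = 0 := Function.notMem_support.mp (fun h' => hc (hsub_a h'))
    have hb' : b t = 0 := Function.notMem_support.mp (fun h' => hc (hsub_b h'))
    exact ht (by simp [ha', hb'])
  have ea : ∑ᶠ t, a t = ∑ t ∈ s, a t :=
    finsum_eq_finset_sum_of_support_subset _ hsub_a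
  have eb : ∑ᶠ t, b t = ∑ t ∈ s, b t :=
    finsum_eq_finset_sum_of_support_subset _ hsub_b
  have emin : ∑ᶠ t, min (a t) (b t) = ∑ t ∈ s, min (a t) (b t) :=
    finsum_eq_finset_sum_of_support_subset _ hsub_min
  have emax : ∑ᶠ t, max (a t) (b t) = ∑ t ∈ s, max (a t) (b t) :=
    finsum_eq_finset_sum_of_support_subset _ hsub_max
  rw [ea, eb, emin]
  rw [emin, emax] at h
  rw [ea] at hωa
  set M := ∑ t ∈ s, min (a t) (b t) with hM
  set X := ∑ t ∈ s, max (a t) (b t) with hX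
  have hMX : M + X = (∑ t ∈ s, a t) + (∑ t ∈ s, b t) := by
    rw [hM, hX, ← Finset.sum_add_distrib, ← Finset.sum_add_distrib]
    exact Finset.sum_congr rfl fun t _ => min_add_max (a t) (b t)
  have hXa : (∑ t ∈ s, a t) ≤ X :=
    Finset.sum_le_sum fun t _ => le_max_left _ _
  have hXpos : 0 < X := lt_of_lt_of_le hωa hXa
  have hτX : τ * X ≤ M := by
    have := mul_le_mul_of_nonneg_right h (le_of_lt hXpos)
    rwa [div_mul_cancel₀ _ (ne_of_gt hXpos)] at this
  have hτ1pos : 0 < τ + 1 := by linarith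
  rw [div_mul_eq_mul_div, div_le_iff₀ hτ1pos]
  nlinarith [hτX, hMX]
end

section
/- Let a and b be weighted token sets with ω(a) > 0 and ω(b) > 0, and let 0 < τ ≤ 1 be a real number. If the weighted Dice similarity 2·Σ_t min(a(t), b(t)) / (ω(a) + ω(b)) is at least τ, then Σ_t min(a(t), b(t)) ≥ (τ / (2 − τ)) · ω(a) and Σ_t min(a(t), b(t)) ≥ (τ / 2) · (ω(a) + ω(b)), and moreover (τ / (2 − τ)) · ω(a) ≤ ω(b) ≤ ((2 − τ) / τ) · ω(a). -/
/-- Weighted Dice overlap lower bound, equivalent overlap, and size bounds. -/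
theorem weighted_dice_bounds {T : Type*} (a b : T → ℝ)
    (haf : (Function.support a).Finite) (hbf : (Function.support b).Finite)
    (ha0 : ∀ t, 0 ≤ a t) (hb0 : ∀ t, 0 ≤ b t)
    (hωa : 0 < ∑ᶠ t, a t) (hωb : 0 < ∑ᶠ t, b t)
    (τ : ℝ) (hτ0 : 0 < τ) (hτ1 : τ ≤ 1)
    (h : τ ≤ 2 * (∑ᶠ t, min (a t) (b t)) / ((∑ᶠ t, a t) + (∑ᶠ t, b t))) :
    (τ / (2 - τ)) * (∑ᶠ t, a t) ≤ (∑ᶠ t, min (a t) (b t)) ∧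
      (τ / 2) * ((∑ᶠ t, a t) + (∑ᶠ t, b t)) ≤ (∑ᶠ t, min (a t) (b t)) ∧
      (τ / (2 - τ)) * (∑ᶠ t, a t) ≤ (∑ᶠ t, b t) ∧
      (∑ᶠ t, b t) ≤ ((2 - τ) / τ) * (∑ᶠ t, a t) := by
  classical
  set s : Finset T := (haf.union hbf).toFinset with hs
  have hsub_a : Function.support a ⊆ ↑s := by
    intro t ht; simp [hs, Set.Finite.mem_toFinset]; exact Or.inl ht
  have hsub_b : Function.support b ⊆ ↑s := by
    intro t ht; simp [hs, Set.Finite.mem_toFinset]; exact Or.inr ht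
  have hsub_m : Function.support (fun t => min (a t) (b t)) ⊆ ↑s := by
    intro t ht
    have : a t ≠ 0 := by
      intro h0
      apply ht
      show min (a t) (b t) = 0
      rw [h0]
      exact min_eq_left (hb0 t)
    exact hsub_a this
  have ea : ∑ᶠ t, a t = ∑ t ∈ s, a t :=
    finsum_eq_finset_sum_of_support_subset _ hsub_a
  have eb : ∑ᶠ t, b t = ∑ t ∈ s, b t :=
    finsum_eq_finset_sum_of_support_subset _ hsub_b
  have em : ∑ᶠ t, min (a t) (b t) = ∑ t ∈ s, min (a t) (b t) :=
    finsum_eq_finset_sum_of_support_subset _ hsub_m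
  set A := ∑ᶠ t, a t
  set B := ∑ᶠ t, b t
  set M := ∑ᶠ t, min (a t) (b t)
  have hMA : M ≤ A := by
    rw [em, ea]; exact Finset.sum_le_sum (fun t _ => min_le_left _ _)
  have hMB : M ≤ B := by
    rw [em, eb]; exact Finset.sum_le_sum (fun t _ => min_le_right _ _)
  have hAB : 0 < A + B := by linarith
  have hkey : τ * (A + B) ≤ 2 * M := (le_div_iff₀ hAB).mp h
  have h2τ : 0 < 2 - τ := by linarith
  -- size bounds
  have hBlow : (τ / (2 - τ)) * A ≤ B := by
    rw [div_mul_eq_mul_div, div_le_iff₀ h2τ]; nlinarith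
  have hBhigh : B ≤ ((2 - τ) / τ) * A := by
    rw [div_mul_eq_mul_div, le_div_iff₀ hτ0]; nlinarith
  refine ⟨?_, ?_, hBlow, hBhigh⟩
  · rw [div_mul_eq_mul_div, div_le_iff₀ h2τ]; nlinarith
  · nlinarith
end

section
/- Let a and b be weighted token sets over a linearly ordered token type, with Σ_t b(t)² = 1, and let t₀ be a token such that a(s) · b(s) = 0 for all s < t₀. Let 0 < τ ≤ 1 be a real number. If Σ_t a(t) · b(t) ≥ τ, then √(Σ_{s ≥ t₀} a(s)²) ≥ τ; if additionally Σ_t a(t)² = 1, then √(Σ_{s < t₀} a(s)²) ≤ √(1 − τ²). -/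
/-- L2AP prefix/suffix bound for Cosine similarity (Cauchy–Schwarz based). -/
theorem l2ap_cosine_bounds {T : Type*} [LinearOrder T] (a b : T → ℝ)
    (haf : (Function.support a).Finite) (hbf : (Function.support b).Finite)
    (ha0 : ∀ t, 0 ≤ a t) (hb0 : ∀ t, 0 ≤ b t)
    (hb2 : (∑ᶠ t, (b t) ^ 2) = 1)
    (t₀ : T) (hpre : ∀ s, s < t₀ → a s * b s = 0)
    (τ : ℝ) (hτ0 : 0 < τ) (hτ1 : τ ≤ 1)
    (h : τ ≤ ∑ᶠ t, a t * b t) :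
    τ ≤ Real.sqrt (∑ᶠ s ∈ Set.Ici t₀, (a s) ^ 2) ∧
      ((∑ᶠ t, (a t) ^ 2) = 1 →
        Real.sqrt (∑ᶠ s ∈ Set.Iio t₀, (a s) ^ 2) ≤ Real.sqrt (1 - τ ^ 2)) := by
  classical
  set F : Finset T := haf.toFinset ∪ hbf.toFinset with hF
  have hsa : Function.support a ⊆ (F : Set T) := by
    intro t ht; simp [hF, Set.Finite.mem_toFinset, ht]
  have hsb : Function.support b ⊆ (F : Set T) := by
    intro t ht; simp [hF, Set.Finite.mem_toFinset, ht]
  have hsa2 : Function.support (fun t => a t ^ 2) ⊆ (F : Set T) := by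
    intro t ht
    exact hsa (by simpa [Function.mem_support, pow_eq_zero_iff] using ht)
  have hsb2 : Function.support (fun t => b t ^ 2) ⊆ (F : Set T) := by
    intro t ht
    exact hsb (by simpa [Function.mem_support, pow_eq_zero_iff] using ht)
  have hsab : Function.support (fun t => a t * b t) ⊆ (F : Set T) := by
    intro t ht
    have : a t ≠ 0 := fun h0 => ht (by simp [h0])
    exact hsa this
  -- convert finsums to finset sums
  have hab : (∑ᶠ t, a t * b t) = ∑ t ∈ F, a t * b t :=
    finsum_eq_finset_sum_of_support_subset _ hsab
  have hbF : (∑ t ∈ F, b t ^ 2) = 1 := by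
    rw [← finsum_eq_finset_sum_of_support_subset _ hsb2]; exact hb2
  have hind : ∀ S : Set T, Function.support (S.indicator (fun t => a t ^ 2)) ⊆ (F : Set T) := by
    intro S t ht
    apply hsa2
    simp only [Function.mem_support, Set.indicator_apply] at ht ⊢
    intro h0
    apply ht
    split <;> simp [h0]
  have hIci : (∑ᶠ s ∈ Set.Ici t₀, (a s) ^ 2) = ∑ t ∈ F.filter (fun t => t₀ ≤ t), a t ^ 2 := by
    rw [finsum_mem_def, finsum_eq_finset_sum_of_support_subset _ (hind _), Finset.sum_filter]
    refine Finset.sum_congr rfl fun t _ => ?_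
    simp [Set.indicator_apply, Set.mem_Ici]
  have hIio : (∑ᶠ s ∈ Set.Iio t₀, (a s) ^ 2) = ∑ t ∈ F.filter (fun t => t < t₀), a t ^ 2 := by
    rw [finsum_mem_def, finsum_eq_finset_sum_of_support_subset _ (hind _), Finset.sum_filter]
    refine Finset.sum_congr rfl fun t _ => ?_
    simp [Set.indicator_apply, Set.mem_Iio]
  set G : Finset T := F.filter (fun t => t₀ ≤ t) with hG
  -- part 1
  have hsum_eq : (∑ t ∈ F, a t * b t) = ∑ t ∈ G, a t * b t := by
    rw [hG, Finset.sum_filter]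
    refine Finset.sum_congr rfl fun t _ => ?_
    by_cases ht : t₀ ≤ t
    · simp [ht]
    · simp [ht, hpre t (lt_of_not_ge ht)]
  have hSnn : 0 ≤ ∑ t ∈ G, a t ^ 2 := Finset.sum_nonneg fun t _ => sq_nonneg _
  have hCS : (∑ t ∈ G, a t * b t) ≤
      Real.sqrt (∑ t ∈ G, a t ^ 2) * Real.sqrt (∑ t ∈ G, b t ^ 2) :=
    Real.sum_mul_le_sqrt_mul_sqrt _ _ _
  have hbG : Real.sqrt (∑ t ∈ G, b t ^ 2) ≤ 1 := by
    rw [show (1 : ℝ) = Real.sqrt 1 by simp, ← hbF]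
    exact Real.sqrt_le_sqrt (Finset.sum_le_sum_of_subset_of_nonneg
      (Finset.filter_subset _ _) (fun t _ _ => sq_nonneg _))
  have h1 : τ ≤ Real.sqrt (∑ t ∈ G, a t ^ 2) := by
    calc τ ≤ ∑ t ∈ G, a t * b t := by rw [← hsum_eq, ← hab]; exact h
    _ ≤ Real.sqrt (∑ t ∈ G, a t ^ 2) * Real.sqrt (∑ t ∈ G, b t ^ 2) := hCS
    _ ≤ Real.sqrt (∑ t ∈ G, a t ^ 2) * 1 :=
        mul_le_mul_of_nonneg_left hbG (Real.sqrt_nonneg _)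
    _ = Real.sqrt (∑ t ∈ G, a t ^ 2) := mul_one _
  refine ⟨by rwa [hIci], fun ha2 => ?_⟩
  -- part 2
  have haF : (∑ t ∈ F, a t ^ 2) = 1 := by
    rw [← finsum_eq_finset_sum_of_support_subset _ hsa2]; exact ha2
  have hsplit : (∑ t ∈ F.filter (fun t => t < t₀), a t ^ 2) + (∑ t ∈ G, a t ^ 2) = 1 := by
    have hGeq : G = F.filter (fun t => ¬ t < t₀) := by
      rw [hG]; apply Finset.filter_congr; intro t _; simp [not_lt]
    rw [hGeq, Finset.sum_filter_add_sum_filter_not F (fun t => t < t₀)]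
    exact haF
  have hτ2 : τ ^ 2 ≤ ∑ t ∈ G, a t ^ 2 := by
    have := Real.sq_sqrt hSnn
    calc τ ^ 2 ≤ Real.sqrt (∑ t ∈ G, a t ^ 2) ^ 2 := by
          apply pow_le_pow_left₀ hτ0.le h1
    _ = ∑ t ∈ G, a t ^ 2 := Real.sq_sqrt hSnn
  rw [hIio]
  apply Real.sqrt_le_sqrt
  linarith
end

section
/- Let a and b be weighted token sets over a linearly ordered token type with ω(a) > 0 and ω(b) > 0, let 0 < τ ≤ 1 be a real number, and let t₀ be a token with a(t₀) > 0 and b(t₀) > 0 such that min(a(s), b(s)) = 0 for all s < t₀. Write p_a = Σ_{s < t₀} a(s), s_a = Σ_{s ≥ t₀} a(s), p_b = Σ_{s < t₀} b(s), s_b = Σ_{s ≥ t₀} b(s). If the weighted Jaccard similarity Σ_t min(a(t), b(t)) / Σ_t max(a(t), b(t)) is at least τ, then s_b ≥ τ · (ω(a) + p_b) and s_b ≤ s_a / τ − p_a − p_b. -/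
/-- Position-enhanced index suffix bounds for weighted Jaccard (PPS filter). -/
theorem pps_jaccard_suffix_bounds {T : Type*} [LinearOrder T] (a b : T → ℝ)
    (haf : (Function.support a).Finite) (hbf : (Function.support b).Finite)
    (ha0 : ∀ t, 0 ≤ a t) (hb0 : ∀ t, 0 ≤ b t)
    (hωa : 0 < ∑ᶠ t, a t) (hωb : 0 < ∑ᶠ t, b t)
    (τ : ℝ) (hτ0 : 0 < τ) (hτ1 : τ ≤ 1)
    (t₀ : T) (hat : 0 < a t₀) (hbt : 0 < b t₀)
    (hpre : ∀ s, s < t₀ → min (a s) (b s) = 0)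
    (h : τ ≤ (∑ᶠ t, min (a t) (b t)) / (∑ᶠ t, max (a t) (b t))) :
    τ * ((∑ᶠ t, a t) + (∑ᶠ s ∈ Set.Iio t₀, b s)) ≤ (∑ᶠ s ∈ Set.Ici t₀, b s) ∧
      (∑ᶠ s ∈ Set.Ici t₀, b s) ≤
        (∑ᶠ s ∈ Set.Ici t₀, a s) / τ - (∑ᶠ s ∈ Set.Iio t₀, a s) -
          (∑ᶠ s ∈ Set.Iio t₀, b s) := by
  classical
  set S : Finset T := (haf.union hbf).toFinset with hS
  have hsubS : Function.support a ∪ Function.support b ⊆ ↑S := by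
    simp [hS]
  have hsa : Function.support a ⊆ ↑S := subset_trans Set.subset_union_left hsubS
  have hsb : Function.support b ⊆ ↑S := subset_trans Set.subset_union_right hsubS
  have hsmin : Function.support (fun t => min (a t) (b t)) ⊆ ↑S := by
    intro t ht
    apply hsa
    intro h0
    apply ht
    simp [Function.mem_support, not_not] at h0 ⊢
    simp [h0, min_eq_left (hb0 t)]
  have hsmax : Function.support (fun t => max (a t) (b t)) ⊆ ↑S := by
    intro t ht
    by_contra hc
    apply ht
    have ha' : a t = 0 := by
      by_contra h'; exact hc (hsa h')
    have hb' : b t = 0 := by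
      by_contra h'; exact hc (hsb h')
    simp [ha', hb']
  -- rewrite all finsums as Finset sums
  have ea : ∑ᶠ t, a t = ∑ t ∈ S, a t := finsum_eq_finset_sum_of_support_subset a hsa
  have eb : ∑ᶠ t, b t = ∑ t ∈ S, b t := finsum_eq_finset_sum_of_support_subset b hsb
  have emin : ∑ᶠ t, min (a t) (b t) = ∑ t ∈ S, min (a t) (b t) :=
    finsum_eq_finset_sum_of_support_subset _ hsmin
  have emax : ∑ᶠ t, max (a t) (b t) = ∑ t ∈ S, max (a t) (b t) :=
    finsum_eq_finset_sum_of_support_subset _ hsmax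
  have epre : ∀ (f : T → ℝ), Function.support f ⊆ ↑S →
      ∑ᶠ s ∈ Set.Iio t₀, f s = ∑ s ∈ S.filter (· < t₀), f s := by
    intro f hf
    apply finsum_mem_eq_sum_of_inter_support_eq
    ext x
    simp only [Set.mem_inter_iff, Set.mem_Iio, Finset.coe_filter, Set.mem_setOf_eq]
    constructor
    · rintro ⟨hx, hfx⟩; exact ⟨⟨hf hfx, hx⟩, hfx⟩
    · rintro ⟨⟨_, hx⟩, hfx⟩; exact ⟨hx, hfx⟩
  have esuf : ∀ (f : T → ℝ), Function.support f ⊆ ↑S →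
      ∑ᶠ s ∈ Set.Ici t₀, f s = ∑ s ∈ S.filter (¬ · < t₀), f s := by
    intro f hf
    apply finsum_mem_eq_sum_of_inter_support_eq
    ext x
    simp only [Set.mem_inter_iff, Set.mem_Ici, Finset.coe_filter, Set.mem_setOf_eq, not_lt]
    constructor
    · rintro ⟨hx, hfx⟩; exact ⟨⟨hf hfx, hx⟩, hfx⟩
    · rintro ⟨⟨_, hx⟩, hfx⟩; exact ⟨hx, hfx⟩
  rw [ea] at hωa
  rw [eb] at hωb
  rw [emin, emax] at h
  rw [epre a hsa, epre b hsb, esuf a hsa, esuf b hsb]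
  set P := S.filter (· < t₀) with hP
  set Q := S.filter (¬ · < t₀) with hQ
  set pa := ∑ s ∈ P, a s
  set sa := ∑ s ∈ Q, a s
  set pb := ∑ s ∈ P, b s
  set sb := ∑ s ∈ Q, b s
  set I := ∑ t ∈ S, min (a t) (b t) with hI
  set U := ∑ t ∈ S, max (a t) (b t) with hU
  have hsplita : ∑ t ∈ S, a t = pa + sa := (Finset.sum_filter_add_sum_filter_not S _ a).symm
  have hsplitb : ∑ t ∈ S, b t = pb + sb := (Finset.sum_filter_add_sum_filter_not S _ b).symm
  -- min is zero on P
  have hminP : ∑ t ∈ P, min (a t) (b t) = 0 := by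
    apply Finset.sum_eq_zero
    intro x hx
    rw [hP, Finset.mem_filter] at hx
    exact hpre x hx.2
  have hIsplit : I = ∑ t ∈ P, min (a t) (b t) + ∑ t ∈ Q, min (a t) (b t) :=
    (Finset.sum_filter_add_sum_filter_not S _ _).symm
  have hIQ : I = ∑ t ∈ Q, min (a t) (b t) := by rw [hIsplit, hminP, zero_add]
  have hIsb : I ≤ sb := by
    rw [hIQ]
    exact Finset.sum_le_sum fun i _ => min_le_right _ _
  have hIsa : I ≤ sa := by
    rw [hIQ]
    exact Finset.sum_le_sum fun i _ => min_le_left _ _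
  -- min + max = a + b
  have hminmax : I + U = (pa + sa) + (pb + sb) := by
    rw [hI, hU, ← hsplita, ← hsplitb, ← Finset.sum_add_distrib, ← Finset.sum_add_distrib]
    apply Finset.sum_congr rfl
    intro x _
    rcases le_total (a x) (b x) with h' | h' <;>
      simp [min_eq_left, min_eq_right, max_eq_left, max_eq_right, h'] <;> ring
  -- max on P equals a + b
  have hmaxP : ∑ t ∈ P, max (a t) (b t) = pa + pb := by
    rw [← Finset.sum_add_distrib]
    apply Finset.sum_congr rfl
    intro x hx
    rw [hP, Finset.mem_filter] at hx
    have hmin := hpre x hx.2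
    rcases le_total (a x) (b x) with h' | h'
    · rw [min_eq_left h'] at hmin
      rw [max_eq_right h', hmin, zero_add]
    · rw [min_eq_right h'] at hmin
      rw [max_eq_left h', hmin, add_zero]
  have hUsplit : U = ∑ t ∈ P, max (a t) (b t) + ∑ t ∈ Q, max (a t) (b t) :=
    (Finset.sum_filter_add_sum_filter_not S _ _).symm
  have hUQb : sb ≤ ∑ t ∈ Q, max (a t) (b t) :=
    Finset.sum_le_sum fun i _ => le_max_right _ _
  have hUge : pa + pb + sb ≤ U := by rw [hUsplit, hmaxP]; linarith
  have hUa : ∑ t ∈ S, a t ≤ U := Finset.sum_le_sum fun i _ => le_max_left _ _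
  have hUpos : 0 < U := lt_of_lt_of_le hωa hUa
  have hτU : τ * U ≤ I := by
    rw [div_eq_mul_inv] at h
    calc τ * U ≤ (I * U⁻¹) * U := by
          apply mul_le_mul_of_nonneg_right h (le_of_lt hUpos)
      _ = I := by field_simp
  constructor
  · -- τ * (ωa + pb) ≤ sb
    have h1 : τ * ((pa + sa) + (pb + sb) - I) ≤ sb := by
      calc τ * ((pa + sa) + (pb + sb) - I) = τ * U := by rw [← hminmax]; ring_nf
        _ ≤ I := hτU
        _ ≤ sb := hIsb
    nlinarith [hτ0.le, hIsb]
  · -- sb ≤ sa / τ - pa - pb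
    have h2 : τ * (pa + pb + sb) ≤ sa := by
      calc τ * (pa + pb + sb) ≤ τ * U := by
            apply mul_le_mul_of_nonneg_left hUge hτ0.le
        _ ≤ I := hτU
        _ ≤ sa := hIsa
    have h3 : (pa + pb + sb) * τ ≤ sa := by nlinarith [h2]
    have : pa + pb + sb ≤ sa / τ := (le_div_iff₀ hτ0).mpr h3
    linarith
end

section
/- Let a and b be weighted token sets over a linearly ordered token type with ω(a) > 0 and ω(b) > 0, let 0 < τ ≤ 1 be a real number, and let t₀ be a token with a(t₀) > 0 and b(t₀) > 0 such that min(a(s), b(s)) = 0 for all s < t₀. Write p_a = Σ_{s < t₀} a(s), s_a = Σ_{s ≥ t₀} a(s), p_b = Σ_{s < t₀} b(s), s_b = Σ_{s ≥ t₀} b(s). If the weighted Dice similarity 2·Σ_t min(a(t), b(t)) / (ω(a) + ω(b)) is at least τ, then s_b ≥ (τ / (2 − τ)) · (ω(a) + p_b) and s_b ≤ ((2 − τ) / τ) · s_a − p_a − p_b. -/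
/-- Position-enhanced index suffix bounds for weighted Dice (PPS filter). -/
theorem pps_dice_suffix_bounds {T : Type*} [LinearOrder T] (a b : T → ℝ)
    (haf : (Function.support a).Finite) (hbf : (Function.support b).Finite)
    (ha0 : ∀ t, 0 ≤ a t) (hb0 : ∀ t, 0 ≤ b t)
    (hωa : 0 < ∑ᶠ t, a t) (hωb : 0 < ∑ᶠ t, b t)
    (τ : ℝ) (hτ0 : 0 < τ) (hτ1 : τ ≤ 1)
    (t₀ : T) (hat : 0 < a t₀) (hbt : 0 < b t₀)
    (hpre : ∀ s, s < t₀ → min (a s) (b s) = 0)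
    (h : τ ≤ 2 * (∑ᶠ t, min (a t) (b t)) / ((∑ᶠ t, a t) + (∑ᶠ t, b t))) :
    (τ / (2 - τ)) * ((∑ᶠ t, a t) + (∑ᶠ s ∈ Set.Iio t₀, b s)) ≤
        (∑ᶠ s ∈ Set.Ici t₀, b s) ∧
      (∑ᶠ s ∈ Set.Ici t₀, b s) ≤
        ((2 - τ) / τ) * (∑ᶠ s ∈ Set.Ici t₀, a s) - (∑ᶠ s ∈ Set.Iio t₀, a s) -
          (∑ᶠ s ∈ Set.Iio t₀, b s) := by
  classical
  set S : Finset T := (haf.union hbf).toFinset with hS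
  have hsa : Function.support a ⊆ (S : Set T) := by
    simp [hS, Set.subset_def, Function.mem_support]
    intro t ht; exact Or.inl ht
  have hsb : Function.support b ⊆ (S : Set T) := by
    simp [hS, Set.subset_def, Function.mem_support]
    intro t ht; exact Or.inr ht
  have hsm : Function.support (fun t => min (a t) (b t)) ⊆ (S : Set T) := by
    intro t ht
    simp only [Function.mem_support] at ht
    apply hsa
    simp only [Function.mem_support]
    intro h0
    exact ht (by simp [h0, min_eq_left (hb0 t)] )
  have ea : ∑ᶠ t, a t = ∑ t ∈ S, a t := finsum_eq_finset_sum_of_support_subset _ hsa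
  have eb : ∑ᶠ t, b t = ∑ t ∈ S, b t := finsum_eq_finset_sum_of_support_subset _ hsb
  have em : ∑ᶠ t, min (a t) (b t) = ∑ t ∈ S, min (a t) (b t) :=
    finsum_eq_finset_sum_of_support_subset _ hsm
  have key : ∀ (f : T → ℝ), Function.support f ⊆ (S : Set T) →
      (∑ᶠ s ∈ Set.Iio t₀, f s = ∑ t ∈ S.filter (fun t => ¬ t₀ ≤ t), f t) ∧
      (∑ᶠ s ∈ Set.Ici t₀, f s = ∑ t ∈ S.filter (fun t => t₀ ≤ t), f t) := by
    intro f hf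
    constructor
    · have hind : Function.support ((Set.Iio t₀).indicator f) ⊆ (S : Set T) :=
        fun t ht => hf (fun h0 => ht (by simp [Set.indicator_apply, h0]))
      rw [finsum_mem_def, finsum_eq_finset_sum_of_support_subset _ hind]
      rw [Finset.sum_filter]
      refine Finset.sum_congr rfl (fun t _ => ?_)
      by_cases ht : t < t₀ <;> simp [Set.indicator_apply, Set.mem_Iio, ht, not_le.symm, not_le]
    · have hind : Function.support ((Set.Ici t₀).indicator f) ⊆ (S : Set T) :=
        fun t ht => hf (fun h0 => ht (by simp [Set.indicator_apply, h0]))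
      rw [finsum_mem_def, finsum_eq_finset_sum_of_support_subset _ hind]
      rw [Finset.sum_filter]
      refine Finset.sum_congr rfl (fun t _ => ?_)
      by_cases ht : t₀ ≤ t <;> simp [Set.indicator_apply, Set.mem_Ici, ht]
  obtain ⟨eap, eas⟩ := key a hsa
  obtain ⟨ebp, ebs⟩ := key b hsb
  rw [ea, eap, eas, ebp, ebs]
  set pa := ∑ t ∈ S.filter (fun t => ¬ t₀ ≤ t), a t with hpa
  set sa := ∑ t ∈ S.filter (fun t => t₀ ≤ t), a t with hsa'
  set pb := ∑ t ∈ S.filter (fun t => ¬ t₀ ≤ t), b t with hpb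
  set sb := ∑ t ∈ S.filter (fun t => t₀ ≤ t), b t with hsb'
  have hasplit : pa + sa = ∑ t ∈ S, a t := by
    rw [hpa, hsa', add_comm]; exact Finset.sum_filter_add_sum_filter_not S _ a
  have hbsplit : pb + sb = ∑ t ∈ S, b t := by
    rw [hpb, hsb', add_comm]; exact Finset.sum_filter_add_sum_filter_not S _ b
  have hmsplit : ∑ t ∈ S, min (a t) (b t) = ∑ t ∈ S.filter (fun t => t₀ ≤ t), min (a t) (b t) := by
    rw [← Finset.sum_filter_add_sum_filter_not S (fun t => t₀ ≤ t) (fun t => min (a t) (b t))]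
    have : ∑ t ∈ S.filter (fun t => ¬ t₀ ≤ t), min (a t) (b t) = 0 := by
      apply Finset.sum_eq_zero
      intro t ht
      simp only [Finset.mem_filter, not_le] at ht
      exact hpre t ht.2
    rw [this, add_zero]
  set I := ∑ t ∈ S.filter (fun t => t₀ ≤ t), min (a t) (b t) with hI
  have hIa : I ≤ sa := Finset.sum_le_sum (fun t _ => min_le_left _ _)
  have hIb : I ≤ sb := Finset.sum_le_sum (fun t _ => min_le_right _ _)
  have hpa0 : 0 ≤ pa := Finset.sum_nonneg (fun t _ => ha0 t)
  have hpb0 : 0 ≤ pb := Finset.sum_nonneg (fun t _ => hb0 t)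
  have hsum_pos : 0 < (∑ᶠ t, a t) + (∑ᶠ t, b t) := by linarith
  have hmain : τ * ((∑ᶠ t, a t) + (∑ᶠ t, b t)) ≤ 2 * I := by
    have := (le_div_iff₀ hsum_pos).mp h
    rw [em, hmsplit] at this
    linarith
  rw [ea, eb] at hmain
  rw [← hasplit, ← hbsplit] at hmain
  have h2τ : 0 < 2 - τ := by linarith
  constructor
  · rw [div_mul_eq_mul_div, div_le_iff₀ h2τ]
    nlinarith
  · rw [show ((2 - τ) / τ) * sa - pa - pb = ((2 - τ) * sa) / τ - pa - pb by ring,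
      le_sub_iff_add_le, le_sub_iff_add_le, le_div_iff₀ hτ0]
    nlinarith
end

section
/- Let a and b be weighted token sets over a linearly ordered token type with Σ_t a(t)² = 1 and Σ_t b(t)² = 1, let 0 < τ ≤ 1 be a real number, and let t₀ be a token such that a(s) · b(s) = 0 for all s < t₀. Write s_a = Σ_{s ≥ t₀} a(s)² and s_b = Σ_{s ≥ t₀} b(s)², and suppose s_a > 0. If Σ_t a(t) · b(t) ≥ τ, then s_b ≥ τ² / s_a. -/
/-- Position-enhanced index suffix lower bound for Cosine (PPS filter). -/
theorem pps_cosine_suffix_bound {T : Type*} [LinearOrder T] (a b : T → ℝ)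
    (haf : (Function.support a).Finite) (hbf : (Function.support b).Finite)
    (ha0 : ∀ t, 0 ≤ a t) (hb0 : ∀ t, 0 ≤ b t)
    (ha2 : (∑ᶠ t, (a t) ^ 2) = 1) (hb2 : (∑ᶠ t, (b t) ^ 2) = 1)
    (τ : ℝ) (hτ0 : 0 < τ) (hτ1 : τ ≤ 1)
    (t₀ : T) (hpre : ∀ s, s < t₀ → a s * b s = 0)
    (hsa : 0 < ∑ᶠ s ∈ Set.Ici t₀, (a s) ^ 2)
    (h : τ ≤ ∑ᶠ t, a t * b t) :
    τ ^ 2 / (∑ᶠ s ∈ Set.Ici t₀, (a s) ^ 2) ≤ ∑ᶠ s ∈ Set.Ici t₀, (b s) ^ 2 := by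
  classical
  set F : Finset T := (haf.union hbf).toFinset with hF
  set G : Finset T := F.filter (fun s => t₀ ≤ s) with hG
  have hFa : Function.support a ⊆ ↑F := by
    intro x hx; simp [hF, Set.Finite.mem_toFinset]; left; exact hx
  have hFb : Function.support b ⊆ ↑F := by
    intro x hx; simp [hF, Set.Finite.mem_toFinset]; right; exact hx
  have hA : (∑ᶠ s ∈ Set.Ici t₀, (a s) ^ 2) = ∑ s ∈ G, (a s) ^ 2 := by
    apply finsum_mem_eq_sum_of_inter_support_eq
    ext x
    simp only [Set.mem_inter_iff, Set.mem_Ici, Function.mem_support, hG, Finset.coe_filter,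
      Set.mem_setOf_eq, Finset.mem_coe]
    constructor
    · rintro ⟨h1, h2⟩
      have : a x ≠ 0 := fun hx => h2 (by simp [hx])
      exact ⟨⟨Finset.mem_coe.mp (hFa this), h1⟩, h2⟩
    · rintro ⟨⟨_, h1⟩, h2⟩; exact ⟨h1, h2⟩
  have hB : (∑ᶠ s ∈ Set.Ici t₀, (b s) ^ 2) = ∑ s ∈ G, (b s) ^ 2 := by
    apply finsum_mem_eq_sum_of_inter_support_eq
    ext x
    simp only [Set.mem_inter_iff, Set.mem_Ici, Function.mem_support, hG, Finset.coe_filter,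
      Set.mem_setOf_eq, Finset.mem_coe]
    constructor
    · rintro ⟨h1, h2⟩
      have : b x ≠ 0 := fun hx => h2 (by simp [hx])
      exact ⟨⟨Finset.mem_coe.mp (hFb this), h1⟩, h2⟩
    · rintro ⟨⟨_, h1⟩, h2⟩; exact ⟨h1, h2⟩
  have hAB : (∑ᶠ t, a t * b t) = ∑ t ∈ G, a t * b t := by
    apply finsum_eq_sum_of_support_subset
    intro x hx
    have hx' : a x * b x ≠ 0 := hx
    have hax : a x ≠ 0 := fun h0 => hx' (by simp [h0])
    have hge : t₀ ≤ x := by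
      by_contra hlt
      exact hx' (hpre x (lt_of_not_ge hlt))
    simp only [hG, Finset.coe_filter, Set.mem_setOf_eq]
    exact ⟨Finset.mem_coe.mp (hFa hax), hge⟩
  have hcs := Finset.sum_mul_sq_le_sq_mul_sq G a b
  rw [hA, hB]
  rw [div_le_iff₀ (by rw [hA] at hsa; exact hsa), hA] at *
  have hτ2 : τ ^ 2 ≤ (∑ t ∈ G, a t * b t) ^ 2 := by
    apply pow_le_pow_left₀ hτ0.le
    rw [hAB] at h; exact h
  calc τ ^ 2 ≤ (∑ t ∈ G, a t * b t) ^ 2 := hτ2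
    _ ≤ (∑ s ∈ G, (a s) ^ 2) * ∑ s ∈ G, (b s) ^ 2 := hcs
    _ = (∑ s ∈ G, (b s) ^ 2) * ∑ s ∈ G, (a s) ^ 2 := mul_comm _ _
end
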